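/- Let a₁, a₂ > 0, α > 0, γ ∈ (0,1), ℓ > 0, and let ψ : ℝ → ℝ satisfy ψ(0) = 1, |ψ(ε)| ≤ 1 for all ε ≥ 0, and the Lipschitz-type bound |1 − ψ(ε)| ≤ L·ε for all ε ∈ [0, ε₀), for some constants L ≥ 0 and ε₀ > 0. Let q* ∈ ℝ, C ∈ ℝ, h₀ > 0, K ≥ 0, and let q : ℝ → ℝ satisfy |q(h) − q* − C·h^α| ≤ K·h^(α+1) for all h ∈ (0, h₀). For h > 0 set ψ_h := ψ((1−γ)h/ℓ) and define m(h) := a₁·[q(h)·γ^α·(γ^α − ψ_h) + q(γh)·(1 − γ^α·ψ_h)] / [a₁·(1 − 2γ^α·ψ_h + γ^(2α)) + a₂·γ^(2α)·(1 − ψ_h²)·h^(2α)]. Then there exist M ≥ 0 and h₁ > 0 such that |q* − m(h)| ≤ M·h^(α+1) for all h ∈ (0, h₁); that is, the Gaussian process posterior mean m is a numerical method of one order higher, α + 1, than the method q on which it is based. -/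

import Mathlib

private lemma mul4_le (a b c d b' c' d' : ℝ) (ha : 0 ≤ a)
    (hb0 : 0 ≤ b) (hc0 : 0 ≤ c) (hd0 : 0 ≤ d)
    (hb : b ≤ b') (hc : c ≤ c') (hd : d ≤ d') (hb'0 : 0 ≤ b') (hc'0 : 0 ≤ c') :
    a * b * c * d ≤ a * b' * c' * d' := by
  apply mul_le_mul _ hd hd0 (mul_nonneg (mul_nonneg ha hb'0) hc'0)
  apply mul_le_mul _ hc hc0 (mul_nonneg ha hb'0)
  exact mul_le_mul_of_nonneg_left hb ha

set_option maxHeartbeats 1000000 in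
/-- With a Lipschitz kernel `ψ` (Hölder exponent `β = 1`), the Gaussian process
posterior mean of black box probabilistic numerics is a numerical method of
order `α + 1`, one order higher than the method `q` on which it is based. -/
theorem bbpn_posterior_mean_order_succ
    (a₁ a₂ α γ ℓ : ℝ)
    (ha₁ : 0 < a₁) (ha₂ : 0 < a₂) (hα : 0 < α) (hγ : γ ∈ Set.Ioo (0:ℝ) 1)
    (hℓ : 0 < ℓ)
    (ψ : ℝ → ℝ) (L ε₀ : ℝ) (hL : 0 ≤ L) (hε₀ : 0 < ε₀)
    (hψ0 : ψ 0 = 1) (hψb : ∀ ε ≥ (0:ℝ), |ψ ε| ≤ 1)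
    (hψLip : ∀ ε ∈ Set.Ico (0:ℝ) ε₀, |1 - ψ ε| ≤ L * ε)
    (qstar C h₀ K : ℝ) (hh₀ : 0 < h₀) (hK : 0 ≤ K)
    (q : ℝ → ℝ)
    (hq : ∀ h ∈ Set.Ioo (0:ℝ) h₀, |q h - qstar - C * h ^ α| ≤ K * h ^ (α + 1)) :
    ∃ M : ℝ, 0 ≤ M ∧ ∃ h₁ : ℝ, 0 < h₁ ∧ ∀ h ∈ Set.Ioo (0:ℝ) h₁,
      |qstar -
        a₁ * (q h * γ ^ α * (γ ^ α - ψ ((1 - γ) * h / ℓ))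
              + q (γ * h) * (1 - γ ^ α * ψ ((1 - γ) * h / ℓ)))
          / (a₁ * (1 - 2 * γ ^ α * ψ ((1 - γ) * h / ℓ) + γ ^ (2 * α))
              + a₂ * γ ^ (2 * α) * (1 - ψ ((1 - γ) * h / ℓ) ^ 2) * h ^ (2 * α))|
        ≤ M * h ^ (α + 1) := by
  obtain ⟨hγ0, hγ1⟩ := hγ
  have hγ0' : (0:ℝ) ≤ γ := hγ0.le
  have h1γ : (0:ℝ) < 1 - γ := by linarith
  set g : ℝ := γ ^ α with hg
  have hg0 : 0 < g := Real.rpow_pos_of_pos hγ0 α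
  have hg1 : g < 1 := Real.rpow_lt_one hγ0' hγ1 hα
  have hgg : γ ^ (2 * α) = g ^ 2 := by
    rw [hg, mul_comm, Real.rpow_mul hγ0', Real.rpow_two]
  have hLγℓ : 0 ≤ L * ((1 - γ) / ℓ) := mul_nonneg hL (div_nonneg h1γ.le hℓ.le)
  set S : ℝ := |qstar| * a₂ * (2 * (L * ((1 - γ) / ℓ)))
      + a₁ * |C| * (2 * (L * ((1 - γ) / ℓ))) + a₁ * (K * 2 + K * 2) with hS
  have hS0 : 0 ≤ S := by
    have h1 : 0 ≤ |qstar| * a₂ * (2 * (L * ((1 - γ) / ℓ))) :=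
      mul_nonneg (mul_nonneg (abs_nonneg _) ha₂.le) (by linarith)
    have h2 : 0 ≤ a₁ * |C| * (2 * (L * ((1 - γ) / ℓ))) :=
      mul_nonneg (mul_nonneg ha₁.le (abs_nonneg _)) (by linarith)
    have h3 : 0 ≤ a₁ * (K * 2 + K * 2) := mul_nonneg ha₁.le (by linarith)
    rw [hS]; linarith
  set d₀ : ℝ := a₁ * (1 - g) ^ 2 with hd₀
  have hd₀0 : 0 < d₀ := mul_pos ha₁ (pow_pos (by linarith) 2)
  refine ⟨S / d₀, div_nonneg hS0 hd₀0.le,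
    min h₀ (min 1 (ℓ * ε₀ / (1 - γ))),
    lt_min hh₀ (lt_min one_pos (div_pos (mul_pos hℓ hε₀) h1γ)), ?_⟩
  rintro h ⟨hh0, hh1⟩
  have hhh₀ : h < h₀ := lt_of_lt_of_le hh1 (min_le_left _ _)
  have hhle1 : h < 1 := lt_of_lt_of_le hh1 ((min_le_right _ _).trans (min_le_left _ _))
  have hhε : h < ℓ * ε₀ / (1 - γ) :=
    lt_of_lt_of_le hh1 ((min_le_right _ _).trans (min_le_right _ _))
  set ε : ℝ := (1 - γ) * h / ℓ with hε
  have hε0 : 0 ≤ ε := div_nonneg (mul_nonneg h1γ.le hh0.le) hℓ.le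
  have hεlt : ε < ε₀ := by
    rw [hε, div_lt_iff₀ hℓ]
    rw [lt_div_iff₀ h1γ] at hhε
    linarith [mul_comm (1 - γ) h, mul_comm ε₀ ℓ]
  have hLε : 0 ≤ L * ε := mul_nonneg hL hε0
  set P : ℝ := ψ ((1 - γ) * h / ℓ) with hP
  have hPb : |P| ≤ 1 := hψb _ hε0
  obtain ⟨hPlo, hPhi⟩ := abs_le.mp hPb
  have hPLip : |1 - P| ≤ L * ε := hψLip ε ⟨hε0, hεlt⟩
  set x : ℝ := h ^ α with hx
  have hx0 : 0 < x := Real.rpow_pos_of_pos hh0 α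
  have hxh0 : 0 ≤ x * h := mul_nonneg hx0.le hh0.le
  have hKxh : 0 ≤ K * (x * h) := mul_nonneg hK hxh0
  have hxle1 : x ≤ 1 := Real.rpow_le_one hh0.le hhle1.le hα.le
  have hx2 : x ^ 2 ≤ x := by
    have h1 := mul_le_mul_of_nonneg_left hxle1 hx0.le
    have h2 : x ^ 2 = x * x := sq x
    linarith
  have hg2 : g ^ 2 ≤ 1 := by
    have h1 := mul_le_mul_of_nonneg_left hg1.le hg0.le
    have h2 : g ^ 2 = g * g := sq g
    linarith
  have hxx : h ^ (2 * α) = x ^ 2 := by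
    rw [hx, mul_comm, Real.rpow_mul hh0.le, Real.rpow_two]
  have hx1 : h ^ (α + 1) = x * h := by
    rw [hx, Real.rpow_add hh0, Real.rpow_one]
  have hγhα : (γ * h) ^ α = g * x := Real.mul_rpow hγ0' hh0.le
  have hγh : γ * h < h := by
    have := mul_lt_mul_of_pos_right hγ1 hh0
    linarith
  -- error bounds
  have he₁ : |q h - qstar - C * x| ≤ K * (x * h) := by
    rw [hx, ← hx1]; exact hq h ⟨hh0, hhh₀⟩
  have he₂ : |q (γ * h) - qstar - C * (g * x)| ≤ K * (x * h) := by
    have h1 := hq (γ * h) ⟨mul_pos hγ0 hh0, hγh.trans hhh₀⟩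
    rw [hγhα] at h1
    refine h1.trans ?_
    rw [← hx1]
    have h2 : (γ * h) ^ (α + 1) ≤ h ^ (α + 1) :=
      Real.rpow_le_rpow (mul_pos hγ0 hh0).le hγh.le (by linarith)
    exact mul_le_mul_of_nonneg_left h2 hK
  rw [hgg, hxx, hx1]
  set e₁ : ℝ := q h - qstar - C * x with he₁def
  set e₂ : ℝ := q (γ * h) - qstar - C * (g * x) with he₂def
  set D : ℝ := a₁ * (1 - 2 * g * P + g ^ 2) + a₂ * g ^ 2 * (1 - P ^ 2) * x ^ 2 with hD
  set N : ℝ := a₁ * (q h * g * (g - P) + q (γ * h) * (1 - g * P)) with hN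
  have hP2 : 0 ≤ 1 - P ^ 2 := by
    have h1 := mul_nonneg (by linarith : (0:ℝ) ≤ 1 - P) (by linarith : (0:ℝ) ≤ 1 + P)
    have h2 : (1 - P) * (1 + P) = 1 - P ^ 2 := by ring
    linarith
  have hDd₀ : d₀ ≤ D := by
    rw [hd₀, hD]
    have h1 := mul_nonneg (mul_nonneg ha₂.le (sq_nonneg g)) (mul_nonneg hP2 (sq_nonneg x))
    have h2 := mul_nonneg (mul_pos ha₁ hg0).le (by linarith : (0:ℝ) ≤ 1 - P)
    linarith [h1, h2]
  have hDpos : 0 < D := lt_of_lt_of_le hd₀0 hDd₀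
  have hkey : qstar - N / D = (qstar * D - N) / D := by
    rw [eq_div_iff hDpos.ne', sub_mul, div_mul_cancel₀ _ hDpos.ne']
  rw [hkey, abs_div, abs_of_pos hDpos]
  have hid : qstar * D - N =
      qstar * (a₂ * g ^ 2 * (1 - P ^ 2) * x ^ 2)
      - a₁ * C * g * (1 + g) * (1 - P) * x
      - a₁ * (e₁ * g * (g - P) + e₂ * (1 - g * P)) := by
    rw [hD, hN, he₁def, he₂def]; ring
  -- bounds on the three pieces
  have h1P2 : |1 - P ^ 2| ≤ 2 * (L * ε) := by
    have hfac : (1:ℝ) - P ^ 2 = (1 - P) * (1 + P) := by ring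
    have h1 : |1 + P| ≤ 2 := by rw [abs_le]; constructor <;> linarith
    rw [hfac, abs_mul]
    have := mul_le_mul hPLip h1 (abs_nonneg _) hLε
    linarith
  have hgP : |g - P| ≤ 2 := by rw [abs_le]; constructor <;> linarith
  have h1gP : |1 - g * P| ≤ 2 := by
    have hgPm : |g * P| ≤ 1 := by
      rw [abs_mul, abs_of_pos hg0]
      exact mul_le_one₀ hg1.le (abs_nonneg P) hPb
    obtain ⟨hl, hr⟩ := abs_le.mp hgPm
    rw [abs_le]; constructor <;> linarith
  have hT1 : |qstar * (a₂ * g ^ 2 * (1 - P ^ 2) * x ^ 2)|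
      ≤ |qstar| * a₂ * (2 * (L * ε)) * x := by
    have heq : |qstar * (a₂ * g ^ 2 * (1 - P ^ 2) * x ^ 2)|
        = |qstar| * a₂ * g ^ 2 * |1 - P ^ 2| * x ^ 2 := by
      rw [abs_mul, abs_mul, abs_mul, abs_mul, abs_of_pos ha₂,
        abs_of_nonneg (sq_nonneg g), abs_of_nonneg (sq_nonneg x)]
      ring
    rw [heq]
    have hle : |qstar| * a₂ * g ^ 2 * |1 - P ^ 2| * x ^ 2
        ≤ |qstar| * a₂ * 1 * (2 * (L * ε)) * x :=
      mul4_le (|qstar| * a₂) (g ^ 2) (|1 - P ^ 2|) (x ^ 2) 1 (2 * (L * ε)) x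
        (mul_nonneg (abs_nonneg _) ha₂.le) (sq_nonneg g) (abs_nonneg _) (sq_nonneg x)
        hg2 h1P2 hx2 zero_le_one (by linarith)
    linarith [hle]
  have hT2 : |a₁ * C * g * (1 + g) * (1 - P) * x| ≤ a₁ * |C| * (2 * (L * ε)) * x := by
    have heq : |a₁ * C * g * (1 + g) * (1 - P) * x|
        = a₁ * |C| * g * (1 + g) * |1 - P| * x := by
      rw [abs_mul, abs_mul, abs_mul, abs_mul, abs_mul, abs_of_pos ha₁, abs_of_pos hg0,
        abs_of_pos (by linarith : (0:ℝ) < 1 + g), abs_of_pos hx0]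
    rw [heq]
    have hle : a₁ * |C| * g * (1 + g) * |1 - P|
        ≤ a₁ * |C| * 1 * 2 * (L * ε) :=
      mul4_le (a₁ * |C|) g (1 + g) (|1 - P|) 1 2 (L * ε)
        (mul_nonneg ha₁.le (abs_nonneg _)) hg0.le (by linarith) (abs_nonneg _)
        hg1.le (by linarith) hPLip zero_le_one (by linarith)
    have := mul_le_mul_of_nonneg_right hle hx0.le
    linarith
  have hT3 : |a₁ * (e₁ * g * (g - P) + e₂ * (1 - g * P))|
      ≤ a₁ * (K * (x * h) * 2 + K * (x * h) * 2) := by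
    have hA : |e₁ * g * (g - P)| ≤ K * (x * h) * 2 := by
      rw [abs_mul, abs_mul, abs_of_pos hg0]
      have h1 : |e₁| * g ≤ K * (x * h) := by
        have h2 : |e₁| * g ≤ |e₁| * 1 := mul_le_mul_of_nonneg_left hg1.le (abs_nonneg _)
        rw [mul_one] at h2
        exact h2.trans he₁
      exact mul_le_mul h1 hgP (abs_nonneg _) hKxh
    have hB : |e₂ * (1 - g * P)| ≤ K * (x * h) * 2 := by
      rw [abs_mul]
      exact mul_le_mul he₂ h1gP (abs_nonneg _) hKxh
    rw [abs_mul, abs_of_pos ha₁]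
    have htr := (abs_add_le (e₁ * g * (g - P)) (e₂ * (1 - g * P))).trans (add_le_add hA hB)
    exact mul_le_mul_of_nonneg_left htr ha₁.le
  have hnum : |qstar * D - N| ≤ S * (x * h) := by
    rw [hid]
    have htri : |qstar * (a₂ * g ^ 2 * (1 - P ^ 2) * x ^ 2)
          - a₁ * C * g * (1 + g) * (1 - P) * x
          - a₁ * (e₁ * g * (g - P) + e₂ * (1 - g * P))|
        ≤ |qstar * (a₂ * g ^ 2 * (1 - P ^ 2) * x ^ 2)|
          + |a₁ * C * g * (1 + g) * (1 - P) * x|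
          + |a₁ * (e₁ * g * (g - P) + e₂ * (1 - g * P))| :=
      (abs_sub _ _).trans (add_le_add_left (abs_sub _ _) _)
    have hsum := htri.trans (add_le_add (add_le_add hT1 hT2) hT3)
    have hSeq : |qstar| * a₂ * (2 * (L * ε)) * x + a₁ * |C| * (2 * (L * ε)) * x
        + a₁ * (K * (x * h) * 2 + K * (x * h) * 2) = S * (x * h) := by
      rw [hS, hε]; ring
    linarith
  have hfinal : |qstar * D - N| / D ≤ S / d₀ * (x * h) := by
    have h1 : |qstar * D - N| / D ≤ S * (x * h) / d₀ :=
      div_le_div₀ (mul_nonneg hS0 hxh0) hnum hd₀0 hDd₀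
    have h2 : S * (x * h) / d₀ = S / d₀ * (x * h) := by ring
    linarith [h1, h2.le, h2.ge]
  exact hfinal
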